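/- Let X be a normed space, a ∈ X, ε > 0, and define f(x) = max{0, ε − ‖x − a‖}. Then f is 1-Lipschitz and 𝕃ip f equals the characteristic function of the closed ball B̄(a,ε): 𝕃ip f(x) = 1 if ‖x−a‖ ≤ ε and 𝕃ip f(x) = 0 if ‖x−a‖ > ε. -/

import Mathlib

open scoped Classical
open Filter Metric Topology ENNReal

/-- The local Lipschitz derivative. -/
noncomputable def LLip {X Y : Type*} [MetricSpace X] [MetricSpace Y] (f : X → Y) (x : X) : ℝ≥0∞ :=
  ⨅ (r : ℝ) (_ : 0 < r), ⨆ (u : X) (_ : u ∈ ball x r) (v : X) (_ : v ∈ ball x r) (_ : u ≠ v),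
    ENNReal.ofReal (dist (f u) (f v) / dist u v)

theorem LLip_cone_eq_indicator_closedBall {X : Type*} [NormedAddCommGroup X]
    [NormedSpace ℝ X] [Nontrivial X] (a : X) (ε : ℝ) (hε : 0 < ε)
    (f : X → ℝ) (hf : f = fun x => max 0 (ε - ‖x - a‖)) :
    LipschitzWith 1 f ∧ ∀ x, LLip f x = (if ‖x - a‖ ≤ ε then 1 else 0) := by
  have hL : LipschitzWith 1 f := by
    apply LipschitzWith.of_dist_le_mul
    intro u v
    rw [hf]
    simp only [Real.dist_eq, NNReal.coe_one, one_mul, dist_eq_norm]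
    have key : ∀ p q : ℝ, |max 0 p - max 0 q| ≤ |p - q| := by
      intro p q; rw [max_comm 0 p, max_comm 0 q]; exact abs_max_sub_max_le_abs _ _ _
    calc |max 0 (ε - ‖u - a‖) - max 0 (ε - ‖v - a‖)|
        ≤ |(ε - ‖u - a‖) - (ε - ‖v - a‖)| := key _ _
      _ = |‖v - a‖ - ‖u - a‖| := by ring_nf
      _ ≤ ‖(v - a) - (u - a)‖ := abs_norm_sub_norm_le _ _
      _ = ‖u - v‖ := by rw [show (v - a) - (u - a) = v - u by abel, norm_sub_rev]
  refine ⟨hL, fun x => ?_⟩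
  have hfval : ∀ u : X, ‖u - a‖ ≤ ε → f u = ε - ‖u - a‖ := by
    intro u hu
    rw [hf]
    exact max_eq_right (by linarith)
  split_ifs with hx
  · -- LLip f x = 1
    apply le_antisymm
    · -- ≤ 1 since 1-Lipschitz
      rcases exists_gt (0:ℝ) with ⟨r, hr⟩
      refine iInf₂_le_of_le 1 one_pos ?_
      refine iSup₂_le fun u _ => iSup₂_le fun v _ => iSup_le fun huv => ?_
      have hd : (0:ℝ) < dist u v := dist_pos.mpr huv
      have := hL.dist_le_mul u v
      rw [NNReal.coe_one, one_mul] at this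
      rw [show (1:ℝ≥0∞) = ENNReal.ofReal 1 by simp]
      exact ENNReal.ofReal_le_ofReal ((div_le_one hd).mpr this)
    · -- ≥ 1
      refine le_iInf₂ fun r hr => ?_
      -- choose direction d and step t
      obtain ⟨d, hd⟩ : ∃ d : X, ‖d‖ = 1 := by
        obtain ⟨y, hy⟩ := exists_ne (0:X)
        exact ⟨‖y‖⁻¹ • y, by
          rw [norm_smul, norm_inv, norm_norm]
          exact inv_mul_cancel₀ (norm_ne_zero_iff.mpr hy)⟩
      by_cases hxa : x = a
      · -- x = a : use v = x + t • d
        set t := min (r/2) (ε/2) with ht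
        have ht0 : 0 < t := lt_min (by linarith) (by linarith)
        set v := x + t • d with hv
        have hvx : dist v x = t := by
          rw [dist_eq_norm, hv]
          simp [norm_smul, hd, abs_of_pos ht0]
        have hvball : v ∈ ball x r := by
          rw [mem_ball, hvx]; exact lt_of_le_of_lt (min_le_left _ _) (by linarith)
        have hva : ‖v - a‖ = t := by
          rw [hv, hxa]; simp [norm_smul, hd, abs_of_pos ht0]
        have hfv : f v = ε - t := by rw [hfval v (by rw [hva]; linarith [min_le_right (r/2) (ε/2)]), hva]
        have hfx : f x = ε := by
          have := hfval x hx
          rw [this, hxa]; simp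
        refine le_iSup₂_of_le v hvball (le_iSup₂_of_le x (mem_ball_self hr) ?_)
        refine le_iSup_of_le (by
          intro h
          rw [← h] at hvx
          simp at hvx
          exact ht0.ne hvx) ?_
        rw [hfv, hfx, hvx, Real.dist_eq]
        rw [show ε - t - ε = -t by ring, abs_neg, abs_of_pos ht0, div_self ht0.ne']
        simp
      · -- x ≠ a
        have hna : 0 < ‖x - a‖ := norm_pos_iff.mpr (sub_ne_zero.mpr hxa)
        set t := min (r/2) ‖x - a‖ with ht
        have ht0 : 0 < t := lt_min (by linarith) hna
        have htle : t ≤ ‖x - a‖ := min_le_right _ _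
        set e := ‖x - a‖⁻¹ • (a - x) with he
        have hne : ‖e‖ = 1 := by
          rw [he, norm_smul, norm_inv, norm_norm, ← norm_neg (a - x), neg_sub]
          exact inv_mul_cancel₀ hna.ne'
        set v := x + t • e with hv
        have hvsub : v - a = (1 - t / ‖x - a‖) • (x - a) := by
          rw [hv, he, smul_smul, sub_smul, one_smul, smul_sub]
          rw [show t * ‖x - a‖⁻¹ = t / ‖x - a‖ by ring]
          module
        have hva : ‖v - a‖ = ‖x - a‖ - t := by
          rw [hvsub, norm_smul, Real.norm_eq_abs, abs_of_nonneg (by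
            have : t / ‖x - a‖ ≤ 1 := (div_le_one hna).mpr htle
            linarith)]
          field_simp
        have hvx : dist v x = t := by
          rw [dist_eq_norm, hv]
          simp [norm_smul, hne, abs_of_pos ht0]
        have hvball : v ∈ ball x r := by
          rw [mem_ball, hvx]; exact lt_of_le_of_lt (min_le_left _ _) (by linarith)
        have hfv : f v = ε - (‖x - a‖ - t) := by
          rw [hfval v (by rw [hva]; linarith), hva]
        have hfx : f x = ε - ‖x - a‖ := hfval x hx
        refine le_iSup₂_of_le v hvball (le_iSup₂_of_le x (mem_ball_self hr) ?_)
        refine le_iSup_of_le (by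
          intro h
          rw [← h] at hvx
          simp at hvx
          exact ht0.ne hvx) ?_
        rw [hfv, hfx, hvx, Real.dist_eq]
        rw [show ε - (‖x - a‖ - t) - (ε - ‖x - a‖) = t by ring, abs_of_pos ht0, div_self ht0.ne']
        simp
  · -- LLip f x = 0
    push_neg at hx
    have hr : 0 < ‖x - a‖ - ε := by linarith
    refine le_antisymm ?_ zero_le
    refine iInf₂_le_of_le (‖x - a‖ - ε) hr ?_
    refine iSup₂_le fun u hu => iSup₂_le fun v hvb => iSup_le fun huv => ?_
    have hzero : ∀ w : X, w ∈ ball x (‖x - a‖ - ε) → f w = 0 := by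
      intro w hw
      rw [mem_ball, dist_eq_norm] at hw
      have : ε < ‖w - a‖ := by
        have h1 : ‖x - a‖ ≤ ‖x - w‖ + ‖w - a‖ := by
          calc ‖x - a‖ = ‖(x - w) + (w - a)‖ := by rw [sub_add_sub_cancel]
            _ ≤ ‖x - w‖ + ‖w - a‖ := norm_add_le _ _
        have h2 : ‖x - w‖ = ‖w - x‖ := norm_sub_rev _ _
        linarith
      simp only [hf]
      exact max_eq_left (by linarith)
    rw [hzero u hu, hzero v hvb]
    simp
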